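/- Let G act linearly on a finite-dimensional vector space V over a field k with |G| invertible in k. Suppose for each a ∈ G there is a linear functional γ_a : V → k satisfying γ_a(v)(u − a·u) = γ_a(u)(v − a·v) for all u,v ∈ V, obtained by averaging: γ_a(v) = (1/|G|) Σ_{b∈G} λ_{ab}(b, b⁻¹·v) where λ satisfies Condition (3) of Theorem 2.1 (λ_h(g,v)(h·u − g·u) = λ_h(g,u)(h·v − g·v)). Then indeed γ_a(v)(u − a·u) − γ_a(u)(v − a·v) = 0 for all a ∈ G and u,v ∈ V. -/

import Mathlib

/-- The averaged functionals `γ_a` inherit Condition (3) of Theorem 2.1: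
`γ_a(v)(u − a·u) − γ_a(u)(v − a·v) = 0`. -/
theorem stmt9 {k G V : Type*} [Field k] [Group G] [Fintype G]
    [AddCommGroup V] [Module k V] [FiniteDimensional k V]
    (hcard : (Fintype.card G : k) ≠ 0)
    (ρ : Representation k G V)
    (lam : G → V →ₗ[k] MonoidAlgebra k G)
    (hcond3 : ∀ (g h : G) (u v : V),
      ((lam g v).coeff h) • (ρ h u - ρ g u) = ((lam g u).coeff h) • (ρ h v - ρ g v))
    (γ : G → V → k)
    (hγ : ∀ (a : G) (v : V),
      γ a v = (Fintype.card G : k)⁻¹ * ∑ b : G, (lam b (ρ b⁻¹ v)).coeff (a * b)) :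
    ∀ (a : G) (u v : V), γ a v • (u - ρ a u) - γ a u • (v - ρ a v) = 0 := by
  intro a u v
  rw [hγ, hγ, sub_eq_zero, mul_smul, mul_smul, Finset.sum_smul, Finset.sum_smul]
  congr 1
  apply Finset.sum_congr rfl
  intro b _
  have h := hcond3 b (a * b) (ρ b⁻¹ u) (ρ b⁻¹ v)
  have hbu : ρ b (ρ b⁻¹ u) = u := by
    rw [← Module.End.mul_apply, ← map_mul, mul_inv_cancel, map_one, Module.End.one_apply]
  have hbv : ρ b (ρ b⁻¹ v) = v := by
    rw [← Module.End.mul_apply, ← map_mul, mul_inv_cancel, map_one, Module.End.one_apply]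
  have hau : ρ (a * b) (ρ b⁻¹ u) = ρ a u := by
    rw [map_mul, Module.End.mul_apply, hbu]
  have hav : ρ (a * b) (ρ b⁻¹ v) = ρ a v := by
    rw [map_mul, Module.End.mul_apply, hbv]
  rw [hbu, hbv, hau, hav] at h
  rw [← neg_sub (ρ a u), ← neg_sub (ρ a v), smul_neg, smul_neg, h]
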